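/- (Counterexample, average list size bound.) In the setting of the previous counterexample with t ≥ 1, n ≥ 2t, the average list size of σ over all t-subsets satisfies (1 / C(n,t)) · Σ_S |σ(S)| ≤ 1 + 2t²/n. In particular, for every ε > 0 there exists n₀ such that for all n ≥ n₀ the average list size is less than 1 + ε. -/

import Mathlib

/-- The multi-assignment `σ` on `t`-subsets of `{x_1,…,x_n}` from the
counterexample (as in Statement 15). -/
def ceList (t : ℕ) (S : Finset ℕ) : Set (ℕ → ℕ) :=
  if 1 ∈ S then
    {f | ∃ j, 2 ≤ j ∧ j ≤ 2 * t ∧ j ∉ S ∧ f 1 = j ∧ ∀ x, x ≠ 1 → f x = 1}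
  else
    {f | ∀ x, f x = 1}

/-- The average list size of `ceList` over all `t`-subsets of `{1,…,n}`. -/
noncomputable def ceAvg (t n : ℕ) : ℚ :=
  (∑ S ∈ (Finset.Icc 1 n).powersetCard t, ((ceList t S).ncard : ℚ)) / (n.choose t : ℚ)

lemma ceList_ncard_of_not_mem (t : ℕ) (S : Finset ℕ) (h : 1 ∉ S) :
    (ceList t S).ncard = 1 := by
  have : ceList t S = {fun _ => 1} := by
    rw [ceList, if_neg h]
    ext f
    simp [funext_iff, Set.mem_setOf_eq]
  rw [this, Set.ncard_singleton]

lemma ceList_ncard_of_mem (t : ℕ) (S : Finset ℕ) (h : 1 ∈ S) :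
    (ceList t S).ncard ≤ 2 * t := by
  have hset : ceList t S =
      {f | ∃ j, 2 ≤ j ∧ j ≤ 2 * t ∧ j ∉ S ∧ f 1 = j ∧ ∀ x, x ≠ 1 → f x = 1} := by
    rw [ceList, if_pos h]
  have hle : (ceList t S).ncard ≤ (↑(Finset.Icc 2 (2 * t)) : Set ℕ).ncard := by
    apply Set.ncard_le_ncard_of_injOn (fun f => f 1)
    · intro f hf
      rw [hset] at hf
      obtain ⟨j, hj2, hjt, _, hfj, _⟩ := hf
      simp only [Finset.coe_Icc, Set.mem_Icc]
      exact ⟨hfj ▸ hj2, hfj ▸ hjt⟩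
    · intro f hf g hg hfg
      rw [hset] at hf hg
      obtain ⟨j, _, _, _, hfj, hf1⟩ := hf
      obtain ⟨k, _, _, _, hgk, hg1⟩ := hg
      funext x
      by_cases hx : x = 1
      · subst hx; exact hfg
      · rw [hf1 x hx, hg1 x hx]
  rw [Set.ncard_coe_finset, Nat.card_Icc] at hle
  omega

lemma count_mem_le (t n : ℕ) (ht : 1 ≤ t) :
    ((Finset.Icc 1 n).powersetCard t |>.filter (fun S => 1 ∈ S)).card ≤
      (n - 1).choose (t - 1) := by
  have : ((Finset.Icc 2 n).powersetCard (t - 1)).card = (n - 1).choose (t - 1) := by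
    rw [Finset.card_powersetCard, Nat.card_Icc]
    congr 1 <;> omega
  rw [← this]
  apply Finset.card_le_card_of_injOn (fun S => S.erase 1)
  · intro S hS
    simp only [Finset.mem_coe, Finset.mem_filter, Finset.mem_powersetCard] at hS
    obtain ⟨⟨hsub, hcard⟩, h1⟩ := hS
    simp only [Finset.mem_coe, Finset.mem_powersetCard]
    constructor
    · intro x hx
      rw [Finset.mem_erase] at hx
      have := hsub hx.2
      rw [Finset.mem_Icc] at this ⊢
      omega
    · rw [Finset.card_erase_of_mem h1, hcard]
  · intro S hS T hT hST
    simp only [Finset.mem_coe, Finset.mem_filter] at hS hT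
    have hST' : S.erase 1 = T.erase 1 := hST
    have : insert 1 (S.erase 1) = insert 1 (T.erase 1) := by rw [hST']
    rwa [Finset.insert_erase hS.2, Finset.insert_erase hT.2] at this

lemma ceAvg_bound (t : ℕ) (ht : 1 ≤ t) :
    ∀ n : ℕ, 2 * t ≤ n → ceAvg t n ≤ 1 + 2 * (t : ℚ) ^ 2 / n := by
  intro n hn
  have hn1 : 1 ≤ n := by omega
  have htn : t ≤ n := by omega
  set P := (Finset.Icc 1 n).powersetCard t with hP
  have hcardP : P.card = n.choose t := by
    rw [hP, Finset.card_powersetCard, Nat.card_Icc]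
    congr 1 <;> omega
  have hCpos : 0 < n.choose t := Nat.choose_pos htn
  have hCQ : (0 : ℚ) < (n.choose t : ℚ) := by exact_mod_cast hCpos
  have hnQ : (0 : ℚ) < (n : ℚ) := by exact_mod_cast hn1
  -- sum bound
  have hsum : ∑ S ∈ P, ((ceList t S).ncard : ℚ) ≤
      (n.choose t : ℚ) + 2 * t * ((n - 1).choose (t - 1) : ℚ) := by
    have step1 : ∑ S ∈ P, ((ceList t S).ncard : ℚ) ≤
        ∑ S ∈ P, (if 1 ∈ S then (2 * t : ℚ) else 1) := by
      apply Finset.sum_le_sum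
      intro S _
      by_cases h : 1 ∈ S
      · rw [if_pos h]
        have := ceList_ncard_of_mem t S h
        exact_mod_cast this
      · rw [if_neg h, ceList_ncard_of_not_mem t S h]; norm_num
    have step2 : ∑ S ∈ P, (if 1 ∈ S then (2 * t : ℚ) else 1) =
        (P.filter (fun S => 1 ∈ S)).card * (2 * t : ℚ) +
        (P.filter (fun S => ¬ 1 ∈ S)).card * 1 := by
      rw [Finset.sum_ite, Finset.sum_const, Finset.sum_const]
      simp [mul_comm]
    have h1 : ((P.filter (fun S => 1 ∈ S)).card : ℚ) ≤ ((n - 1).choose (t - 1) : ℚ) := by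
      exact_mod_cast count_mem_le t n ht
    have h2 : ((P.filter (fun S => ¬ 1 ∈ S)).card : ℚ) ≤ (n.choose t : ℚ) := by
      have : (P.filter (fun S => ¬ 1 ∈ S)).card ≤ P.card :=
        Finset.card_filter_le _ _
      rw [hcardP] at this
      exact_mod_cast this
    calc ∑ S ∈ P, ((ceList t S).ncard : ℚ)
        ≤ ∑ S ∈ P, (if 1 ∈ S then (2 * t : ℚ) else 1) := step1
      _ = (P.filter (fun S => 1 ∈ S)).card * (2 * t : ℚ) +
          (P.filter (fun S => ¬ 1 ∈ S)).card * 1 := step2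
      _ ≤ ((n - 1).choose (t - 1) : ℚ) * (2 * t) + (n.choose t : ℚ) * 1 := by
          apply add_le_add
          · apply mul_le_mul_of_nonneg_right h1
            positivity
          · exact mul_le_mul_of_nonneg_right h2 (by norm_num)
      _ = (n.choose t : ℚ) + 2 * t * ((n - 1).choose (t - 1) : ℚ) := by ring
  -- key identity: n * C(n-1, t-1) = t * C(n, t)
  have hid : (n : ℚ) * ((n - 1).choose (t - 1) : ℚ) = (t : ℚ) * (n.choose t : ℚ) := by
    have h := Nat.add_one_mul_choose_eq (n - 1) (t - 1)
    have hn' : n - 1 + 1 = n := by omega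
    have ht' : t - 1 + 1 = t := by omega
    simp only [Nat.succ_eq_add_one, hn', ht'] at h
    exact_mod_cast h.trans (mul_comm _ _)
  rw [ceAvg]
  rw [div_le_iff₀ hCQ]
  calc ∑ S ∈ P, ((ceList t S).ncard : ℚ)
      ≤ (n.choose t : ℚ) + 2 * t * ((n - 1).choose (t - 1) : ℚ) := hsum
    _ ≤ (1 + 2 * (t : ℚ) ^ 2 / n) * (n.choose t : ℚ) := by
        rw [add_mul, one_mul]
        apply add_le_add_right
        rw [div_mul_eq_mul_div, le_div_iff₀ hnQ]
        have : 2 * (t : ℚ) * ((n : ℚ) * ((n - 1).choose (t - 1) : ℚ)) =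
            2 * (t : ℚ) * ((t : ℚ) * (n.choose t : ℚ)) := by rw [hid]
        nlinarith [this]

/-- counterexample, average list size: the average list size is at
most `1 + 2t²/n`; in particular it is below `1 + ε` for all large enough `n`. -/
theorem counterexample_average_size (t : ℕ) (ht : 1 ≤ t) :
    (∀ n : ℕ, 2 * t ≤ n → ceAvg t n ≤ 1 + 2 * (t : ℚ) ^ 2 / n) ∧
    (∀ ε : ℚ, 0 < ε → ∃ n₀ : ℕ, ∀ n : ℕ, n₀ ≤ n → ceAvg t n < 1 + ε) := by
  refine ⟨ceAvg_bound t ht, ?_⟩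
  intro ε hε
  refine ⟨max (2 * t) (⌈2 * (t : ℚ) ^ 2 / ε⌉₊ + 1), fun n hn => ?_⟩
  have h2t : 2 * t ≤ n := le_trans (le_max_left _ _) hn
  have hceil : ⌈2 * (t : ℚ) ^ 2 / ε⌉₊ + 1 ≤ n := le_trans (le_max_right _ _) hn
  have hlt : 2 * (t : ℚ) ^ 2 / ε < (n : ℚ) := by
    calc 2 * (t : ℚ) ^ 2 / ε ≤ (⌈2 * (t : ℚ) ^ 2 / ε⌉₊ : ℚ) := Nat.le_ceil _
      _ < (n : ℚ) := by exact_mod_cast Nat.lt_of_lt_of_le (Nat.lt_succ_self _) hceil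
  have hnQ : (0 : ℚ) < (n : ℚ) := by
    have : 1 ≤ n := by omega
    exact_mod_cast this
  have key : 2 * (t : ℚ) ^ 2 / n < ε := by
    rw [div_lt_iff₀ hnQ]
    rw [div_lt_iff₀ hε] at hlt
    linarith
  calc ceAvg t n ≤ 1 + 2 * (t : ℚ) ^ 2 / n := ceAvg_bound t ht n h2t
    _ < 1 + ε := by linarith
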